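/- (Same-ray lemma, convexity argument implicit in the Remainder Lemma.) Assume the avoidance hypothesis. Then for every u ∈ ℝ² with ‖u‖ ≤ 1, if ((x+Eu)₂ − b)·(x₁ − a) = ((x+Eu)₁ − a)·(x₂ − b) (i.e. (x+Eu) − o and x − o are parallel), then there exists a real t > 0 with (x + Eu) − o = t·(x − o). -/

import Mathlib

noncomputable section

/-- The sensor location `o = (a, b)`. -/
def oPt (a b : ℝ) : EuclideanSpace ℝ (Fin 2) := WithLp.toLp 2 ![a, b]

/-- Matrix–vector multiplication, viewed as a map on the Euclidean plane. -/
def mv (M : Matrix (Fin 2) (Fin 2) ℝ) (u : EuclideanSpace ℝ (Fin 2)) :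
    EuclideanSpace ℝ (Fin 2) := WithLp.toLp 2 (M.mulVec u)

/-- **Same-ray lemma.** Under the avoidance hypothesis, if `(x+Eu) − o` is parallel to
`x − o` then the two vectors are positively proportional. -/
theorem same_ray_of_parallel
    (a b : ℝ) (x : EuclideanSpace ℝ (Fin 2)) (E : Matrix (Fin 2) (Fin 2) ℝ)
    (hE : 0 < E.det)
    (havoid : ∀ u : EuclideanSpace ℝ (Fin 2), ‖u‖ ≤ 1 →
      ¬((x + mv E u) 0 ≤ a ∧ (x + mv E u) 1 = b)) :
    ∀ u : EuclideanSpace ℝ (Fin 2), ‖u‖ ≤ 1 →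
      ((x + mv E u) 1 - b) * (x 0 - a) = ((x + mv E u) 0 - a) * (x 1 - b) →
        ∃ t : ℝ, 0 < t ∧
          (x + mv E u) - oPt a b =
            t • (x - oPt a b) := by
  intro u hu hpar
  have hadd0 : (x + mv E u) 0 = x 0 + mv E u 0 := rfl
  have hadd1 : (x + mv E u) 1 = x 1 + mv E u 1 := rfl
  set d0 := x 0 - a with hd0def
  set d1 := x 1 - b with hd1def
  set e0 := (x + mv E u) 0 - a with he0def
  set e1 := (x + mv E u) 1 - b with he1def
  -- avoidance at 0
  have hx : ¬(d0 ≤ 0 ∧ d1 = 0) := by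
    have h := havoid 0 (by simp)
    have hz : mv E (0 : EuclideanSpace ℝ (Fin 2)) = 0 := by
      simp [mv, Matrix.mulVec_zero]
    rw [hz, add_zero] at h
    intro ⟨h1, h2⟩
    exact h ⟨by linarith [hd0def], by linarith [hd1def]⟩
  have hy : ¬(e0 ≤ 0 ∧ e1 = 0) := by
    have h := havoid u hu
    intro ⟨h1, h2⟩
    exact h ⟨by linarith, by linarith⟩
  -- find t
  obtain ⟨t, ht0, ht1⟩ : ∃ t : ℝ, e0 = t * d0 ∧ e1 = t * d1 := by
    by_cases hd1 : d1 = 0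
    · have hd0pos : 0 < d0 := by
        by_contra h
        exact hx ⟨le_of_not_gt h, hd1⟩
      have he1z : e1 = 0 := by
        have := hpar
        rw [hd1, mul_zero] at this
        exact mul_left_cancel₀ (ne_of_gt hd0pos) (by linarith [this] : d0 * e1 = d0 * 0) |>.symm ▸ (by
          nlinarith [this])
      exact ⟨e0 / d0, by field_simp, by rw [he1z, hd1, mul_zero]⟩
    · refine ⟨e1 / d1, ?_, by field_simp⟩
      field_simp
      nlinarith [hpar]
  -- t ≠ 0
  have htne : t ≠ 0 := by
    intro h
    rw [h, zero_mul] at ht0 ht1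
    exact hy ⟨le_of_eq ht0, ht1⟩
  -- t not negative
  have htpos : 0 < t := by
    rcases lt_trichotomy t 0 with hneg | hz | hpos
    · exfalso
      set s : ℝ := 1 / (1 - t) with hsdef
      have h1t : (0:ℝ) < 1 - t := by linarith
      have hs0 : 0 < s := by positivity
      have hs1 : s ≤ 1 := by
        rw [hsdef]
        rw [div_le_one h1t]; linarith
      have hns : ‖(s • u : EuclideanSpace ℝ (Fin 2))‖ ≤ 1 := by
        rw [norm_smul]
        simp only [Real.norm_eq_abs, abs_of_pos hs0]
        calc s * ‖u‖ ≤ 1 * 1 := by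
              apply mul_le_mul hs1 hu (norm_nonneg _) (by norm_num)
          _ = 1 := by norm_num
      have h := havoid (s • u) hns
      apply h
      have hmv : mv E (s • u) = s • mv E u := by
        apply WithLp.ofLp_injective
        show E.mulVec (s • u).ofLp = s • E.mulVec u.ofLp
        funext i
        fin_cases i <;> simp [Matrix.mulVec, dotProduct, Fin.sum_univ_two] <;>
        ring
      have hc0 : (x + mv E (s • u)) 0 = x 0 + s * mv E u 0 := by
        rw [hmv]; rfl
      have hc1 : (x + mv E (s • u)) 1 = x 1 + s * mv E u 1 := by
        rw [hmv]; rfl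
      have hEu0 : mv E u 0 = (t - 1) * d0 := by
        have : e0 = x 0 + mv E u 0 - a := by rw [he0def, hadd0]
        nlinarith [this, ht0]
      have hEu1 : mv E u 1 = (t - 1) * d1 := by
        have : e1 = x 1 + mv E u 1 - b := by rw [he1def, hadd1]
        nlinarith [this, ht1]
      have hst : s * (1 - t) = 1 := by
        rw [hsdef]; field_simp
      have hst' : s * (t - 1) = -1 := by linear_combination -hst
      constructor
      · rw [hc0, hEu0]
        have : x 0 + s * ((t - 1) * d0) = a := by
          linear_combination d0 * hst' - hd0def
        linarith [this]
      · rw [hc1, hEu1]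
        linear_combination d1 * hst' - hd1def
    · exact absurd hz htne
    · exact hpos
  refine ⟨t, htpos, ?_⟩
  ext i
  have hsub : ∀ j, ((x + mv E u) - oPt a b) j = (x + mv E u) j - oPt a b j := fun j => rfl
  have hsm : ∀ j, (t • (x - oPt a b)) j = t * (x j - oPt a b j) := fun j => rfl
  rw [hsub, hsm]
  fin_cases i
  · show (x + mv E u) 0 - oPt a b 0 = t * (x 0 - oPt a b 0)
    have ho : oPt a b 0 = a := rfl
    rw [ho]
    exact ht0
  · show (x + mv E u) 1 - oPt a b 1 = t * (x 1 - oPt a b 1)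
    have ho : oPt a b 1 = b := rfl
    rw [ho]
    exact ht1
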